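/- Fix a positive integer r. The number of partitions (λ_1 ≥ ... ≥ λ_k ≥ 0) of n satisfying λ_i ≥ r·λ_{i+1} for 1 ≤ i ≤ k-1 equals the number of k-tuples (s_1,...,s_k) of nonnegative integers with Σ_{i=1}^k (1 + r + r² + ... + r^{i-1})·s_i = n. Equivalently, the generating function is Π_{i=0}^{k-1} (1 - q^{1+r+...+r^i})^{-1}. -/

import Mathlib

private def s6ext (k : ℕ) (s : Fin k → ℕ) (m : ℕ) : ℕ :=
  if h : m < k then s ⟨m, h⟩ else 0

private def s6G (k r : ℕ) (s : Fin k → ℕ) (m : ℕ) : ℕ :=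
  ∑ t ∈ Finset.range (k - m), r ^ t * s6ext k s (m + t)

private def s6F (k r : ℕ) (lam : Fin k → ℕ) (i : Fin k) : ℕ :=
  lam i - r * (if h : (i : ℕ) + 1 < k then lam ⟨(i : ℕ) + 1, h⟩ else 0)

private lemma s6ext_coe (k : ℕ) (s : Fin k → ℕ) (i : Fin k) :
    s6ext k s (i : ℕ) = s i := by
  simp [s6ext, i.isLt]

private lemma s6G_rec (k r : ℕ) (s : Fin k → ℕ) (m : ℕ) :
    s6G k r s m = s6ext k s m + r * s6G k r s (m + 1) := by
  rcases Nat.lt_or_ge m k with h | h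
  · have hk : k - m = (k - (m + 1)) + 1 := by omega
    rw [s6G, hk, Finset.sum_range_succ']
    simp only [pow_zero, one_mul, add_zero]
    rw [s6G, Finset.mul_sum, add_comm]
    congr 1
    apply Finset.sum_congr rfl
    intro t _
    rw [show m + (t + 1) = (m + 1) + t by ring, pow_succ]
    ring
  · have h0 : k - m = 0 := by omega
    have h1 : k - (m + 1) = 0 := by omega
    have h2 : s6ext k s m = 0 := by simp [s6ext, Nat.not_lt.mpr h]
    simp [s6G, h0, h1, h2]

private lemma s6_tri (r : ℕ) (f : ℕ → ℕ) (k : ℕ) :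
    ∑ i ∈ Finset.range k, ∑ t ∈ Finset.range (k - i), r ^ t * f (i + t)
      = ∑ j ∈ Finset.range k, (∑ t ∈ Finset.range (j + 1), r ^ t) * f j := by
  induction k with
  | zero => simp
  | succ k ih =>
    have step : ∀ i ∈ Finset.range (k + 1),
        ∑ t ∈ Finset.range (k + 1 - i), r ^ t * f (i + t)
          = (∑ t ∈ Finset.range (k - i), r ^ t * f (i + t)) + r ^ (k - i) * f k := by
      intro i hi
      have hik : i ≤ k := by simpa [Nat.lt_succ_iff] using hi
      have : k + 1 - i = (k - i) + 1 := by omega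
      rw [this, Finset.sum_range_succ, show i + (k - i) = k by omega]
    rw [Finset.sum_congr rfl step, Finset.sum_add_distrib]
    have h1 : ∑ i ∈ Finset.range (k + 1), ∑ t ∈ Finset.range (k - i), r ^ t * f (i + t)
        = ∑ i ∈ Finset.range k, ∑ t ∈ Finset.range (k - i), r ^ t * f (i + t) := by
      rw [Finset.sum_range_succ]
      simp
    have h2 : ∑ i ∈ Finset.range (k + 1), r ^ (k - i) * f k
        = (∑ t ∈ Finset.range (k + 1), r ^ t) * f k := by
      rw [Finset.sum_mul]
      calc ∑ i ∈ Finset.range (k + 1), r ^ (k - i) * f k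
          = ∑ i ∈ Finset.range (k + 1), r ^ (k + 1 - 1 - i) * f k := by
            apply Finset.sum_congr rfl; intro i hi; congr 2
        _ = ∑ i ∈ Finset.range (k + 1), r ^ i * f k :=
            Finset.sum_range_reflect (fun t => r ^ t * f k) (k + 1)
    rw [h1, ih, h2]
    exact (Finset.sum_range_succ _ k).symm

private lemma s6G_sum (k r : ℕ) (s : Fin k → ℕ) :
    ∑ i : Fin k, s6G k r s (i : ℕ)
      = ∑ i : Fin k, (∑ t ∈ Finset.range ((i : ℕ) + 1), r ^ t) * s i := by
  calc ∑ i : Fin k, s6G k r s (i : ℕ)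
      = ∑ i ∈ Finset.range k, s6G k r s i := Fin.sum_univ_eq_sum_range _ k
    _ = ∑ j ∈ Finset.range k, (∑ t ∈ Finset.range (j + 1), r ^ t) * s6ext k s j := by
        simp only [s6G]; exact s6_tri r (s6ext k s) k
    _ = ∑ i : Fin k, (∑ t ∈ Finset.range ((i : ℕ) + 1), r ^ t) * s6ext k s (i : ℕ) :=
        (Fin.sum_univ_eq_sum_range (fun j => (∑ t ∈ Finset.range (j + 1), r ^ t) * s6ext k s j) k).symm
    _ = ∑ i : Fin k, (∑ t ∈ Finset.range ((i : ℕ) + 1), r ^ t) * s i :=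
        Finset.sum_congr rfl (fun i _ => by rw [s6ext_coe])


private lemma s6GF (k r : ℕ) (lam : Fin k → ℕ)
    (hlam : ∀ i : Fin k, ∀ h : (i : ℕ) + 1 < k, r * lam ⟨(i : ℕ) + 1, h⟩ ≤ lam i) :
    ∀ m : ℕ, s6G k r (s6F k r lam) m = s6ext k lam m := by
  have key : ∀ d m, k - m = d → s6G k r (s6F k r lam) m = s6ext k lam m := by
    intro d
    induction d with
    | zero =>
      intro m hm
      have hmk : ¬ m < k := by omega
      simp [s6G, s6ext, hm, hmk]
    | succ d ihd =>
      intro m hm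
      have hmk : m < k := by omega
      rw [s6G_rec, ihd (m + 1) (by omega)]
      have hF : s6ext k (s6F k r lam) m = s6F k r lam ⟨m, hmk⟩ := by
        simp [s6ext, hmk]
      rw [hF]
      by_cases h1 : m + 1 < k
      · have hx : s6ext k lam (m + 1) = lam ⟨m + 1, h1⟩ := by simp [s6ext, h1]
        have hy : s6ext k lam m = lam ⟨m, hmk⟩ := by simp [s6ext, hmk]
        have hF2 : s6F k r lam ⟨m, hmk⟩ = lam ⟨m, hmk⟩ - r * lam ⟨m + 1, h1⟩ := by
          rw [s6F, dif_pos h1]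
        have hle : r * lam ⟨m + 1, h1⟩ ≤ lam ⟨m, hmk⟩ := hlam ⟨m, hmk⟩ h1
        rw [hx, hy, hF2]
        omega
      · have hx : s6ext k lam (m + 1) = 0 := by simp [s6ext, h1]
        have hy : s6ext k lam m = lam ⟨m, hmk⟩ := by simp [s6ext, hmk]
        have hF2 : s6F k r lam ⟨m, hmk⟩ = lam ⟨m, hmk⟩ := by
          rw [s6F, dif_neg h1]
          simp
        rw [hx, hy, hF2]
        simp
  exact fun m => key (k - m) m rfl

private lemma s6FG (k r : ℕ) (s : Fin k → ℕ) (i : Fin k) :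
    s6F k r (fun j : Fin k => s6G k r s (j : ℕ)) i = s i := by
  have hik := i.isLt
  by_cases h1 : (i : ℕ) + 1 < k
  · rw [s6F, dif_pos h1, s6G_rec k r s (i : ℕ), s6ext_coe]
    have hcoe : (((⟨(i : ℕ) + 1, h1⟩ : Fin k) : ℕ)) = (i : ℕ) + 1 := rfl
    rw [hcoe]
    omega
  · rw [s6F, dif_neg h1, s6G_rec k r s (i : ℕ), s6ext_coe]
    have hz : k - ((i : ℕ) + 1) = 0 := by omega
    have h0 : s6G k r s ((i : ℕ) + 1) = 0 := by simp [s6G, hz]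
    rw [h0]
    omega

theorem stmt_6 (k n r : ℕ) (hr : 0 < r) :
    {lam : Fin k → ℕ | Antitone lam ∧
      (∀ i : Fin k, ∀ h : (i : ℕ) + 1 < k, r * lam ⟨(i : ℕ) + 1, h⟩ ≤ lam i) ∧
      ∑ i, lam i = n}.ncard =
    {s : Fin k → ℕ | ∑ i : Fin k, (∑ t ∈ Finset.range ((i : ℕ) + 1), r ^ t) * s i = n}.ncard := by
  classical
  set A : Set (Fin k → ℕ) := {lam : Fin k → ℕ | Antitone lam ∧
      (∀ i : Fin k, ∀ h : (i : ℕ) + 1 < k, r * lam ⟨(i : ℕ) + 1, h⟩ ≤ lam i) ∧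
      ∑ i, lam i = n} with hA
  set B : Set (Fin k → ℕ) :=
    {s : Fin k → ℕ | ∑ i : Fin k, (∑ t ∈ Finset.range ((i : ℕ) + 1), r ^ t) * s i = n} with hB
  set g : (Fin k → ℕ) → (Fin k → ℕ) := fun s i => s6G k r s (i : ℕ) with hg
  have hGsucc : ∀ (s : Fin k → ℕ) (m : ℕ), s6G k r s (m + 1) ≤ s6G k r s m := by
    intro s m
    rw [s6G_rec k r s m]
    calc s6G k r s (m + 1) = 1 * s6G k r s (m + 1) := (one_mul _).symm
      _ ≤ r * s6G k r s (m + 1) := Nat.mul_le_mul_right _ hr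
      _ ≤ _ := Nat.le_add_left _ _
  have hmapsF : Set.MapsTo (s6F k r) A B := by
    intro lam hlam
    obtain ⟨-, hrat, hsum⟩ := hlam
    show ∑ i : Fin k, (∑ t ∈ Finset.range ((i : ℕ) + 1), r ^ t) * s6F k r lam i = n
    rw [← s6G_sum k r (s6F k r lam)]
    calc ∑ i : Fin k, s6G k r (s6F k r lam) (i : ℕ)
        = ∑ i : Fin k, lam i := by
          refine Finset.sum_congr rfl fun i _ => ?_
          rw [s6GF k r lam hrat (i : ℕ), s6ext_coe]
      _ = n := hsum
  have hmapsG : Set.MapsTo g B A := by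
    intro s hs
    refine ⟨?_, ?_, ?_⟩
    · intro i j hij
      have hanti : Antitone (s6G k r s) := antitone_nat_of_succ_le (hGsucc s)
      exact hanti (by exact_mod_cast hij)
    · intro i h
      show r * s6G k r s ((i : ℕ) + 1) ≤ s6G k r s (i : ℕ)
      rw [s6G_rec k r s (i : ℕ)]
      exact Nat.le_add_left _ _
    · show ∑ i : Fin k, s6G k r s (i : ℕ) = n
      rw [s6G_sum k r s]
      exact hs
  have hinv : Set.InvOn g (s6F k r) A B := by
    constructor
    · intro lam hlam
      obtain ⟨-, hrat, -⟩ := hlam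
      funext i
      show s6G k r (s6F k r lam) (i : ℕ) = lam i
      rw [s6GF k r lam hrat (i : ℕ), s6ext_coe]
    · intro s _
      funext i
      exact s6FG k r s i
  have hbij : Set.BijOn (s6F k r) A B := hinv.bijOn hmapsF hmapsG
  calc A.ncard = (s6F k r '' A).ncard := (Set.ncard_image_of_injOn hbij.injOn).symm
    _ = B.ncard := by rw [hbij.image_eq]
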